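/- Let λ ∈ ℂ, μ > 0, h > 0 and n ≥ 1 be a natural number. If |λ|h ≤ 1/2, then (1 + μnh²)/|1 − λh| ≤ exp(2|λ|h + μ(2n−1)h²). -/

import Mathlib

/-- Key inequality in the proof of the induction lemma for zero-stability. -/
theorem stmt_1 (lam : ℂ) (μ : ℝ) (hμ : 0 < μ) (h : ℝ) (hh : 0 < h)
    (n : ℕ) (hn : 1 ≤ n) (hsmall : ‖lam‖ * h ≤ 1 / 2) :
    (1 + μ * n * h ^ 2) / ‖1 - lam * (h : ℂ)‖
      ≤ Real.exp (2 * ‖lam‖ * h + μ * (2 * n - 1) * h ^ 2) := by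
  set x := ‖lam‖ * h with hxdef
  have hx0 : 0 ≤ x := mul_nonneg (norm_nonneg _) hh.le
  have hden : (1 : ℝ) - x ≤ ‖1 - lam * (h : ℂ)‖ := by
    have := norm_sub_norm_le (1 : ℂ) (lam * (h : ℂ))
    simpa [norm_mul, Complex.norm_real, Real.norm_eq_abs, abs_of_pos hh, hxdef]
      using this
  have hdenpos : (0 : ℝ) < 1 - x := by linarith
  have ha : 0 ≤ μ * n * h ^ 2 := by positivity
  have hn1 : (1 : ℝ) ≤ (n : ℝ) := by exact_mod_cast hn
  have hnum : (0 : ℝ) ≤ 1 + μ * n * h ^ 2 := by linarith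
  have step1 : (1 + μ * n * h ^ 2) / ‖1 - lam * (h : ℂ)‖
      ≤ (1 + μ * n * h ^ 2) / (1 - x) :=
    div_le_div_of_nonneg_left hnum hdenpos hden
  have e1 : 1 + μ * n * h ^ 2 ≤ Real.exp (μ * n * h ^ 2) := by
    simpa [add_comm] using Real.add_one_le_exp (μ * n * h ^ 2)
  have e2 : 1 + 2 * x ≤ Real.exp (2 * x) := by
    simpa [add_comm] using Real.add_one_le_exp (2 * x)
  have step2 : (1 + μ * n * h ^ 2) / (1 - x) ≤ Real.exp (μ * n * h ^ 2 + 2 * x) := by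
    rw [div_le_iff₀ hdenpos, Real.exp_add]
    have k1 : (1 : ℝ) ≤ (1 + 2 * x) * (1 - x) := by nlinarith
    have k2 : (1 + μ * n * h ^ 2) * (1 + 2 * x)
        ≤ Real.exp (μ * n * h ^ 2) * Real.exp (2 * x) :=
      mul_le_mul e1 e2 (by linarith) (Real.exp_pos _).le
    nlinarith [mul_le_mul_of_nonneg_right k2 hdenpos.le,
      mul_le_mul_of_nonneg_left k1 hnum]
  have step3 : Real.exp (μ * n * h ^ 2 + 2 * x)
      ≤ Real.exp (2 * ‖lam‖ * h + μ * (2 * n - 1) * h ^ 2) := by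
    apply Real.exp_le_exp.2
    have : (n : ℝ) ≤ 2 * n - 1 := by linarith
    have h2 : μ * n * h ^ 2 ≤ μ * (2 * n - 1) * h ^ 2 := by nlinarith
    have hx' : 2 * x = 2 * ‖lam‖ * h := by rw [hxdef]; ring
    linarith
  exact step1.trans (step2.trans step3)
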